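/- Let f(x) = ax + b and g(x) = cx + d with a ≠ 1, c ≠ 1, and ac ≠ 1. Define F_f = (1/(1-a), b/(1-a)), F_g = (1/(1-c) + 1, d/(1-c)), and F_{g∘f} = (2/(1-ac), (bc+d)/(1-ac)). Then (1 - t)·F_f + t·F_g = F_{g∘f} for t = (1-c)/(1-ac); in particular the three points are collinear. -/

import Mathlib

/-- Foci of linear functions `f x = a*x + b`, `g x = c*x + d` and their
composition are collinear: `(1 - t) • F_f + t • F_g = F_{g∘f}` with
`t = (1 - c)/(1 - a*c)`. -/
theorem stmt_14 (a b c d : ℝ) (ha : a ≠ 1) (hc : c ≠ 1) (hac : a * c ≠ 1) :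
    let Ff : ℝ × ℝ := (1 / (1 - a), b / (1 - a))
    let Fg : ℝ × ℝ := (1 / (1 - c) + 1, d / (1 - c))
    let Fgf : ℝ × ℝ := (2 / (1 - a * c), (b * c + d) / (1 - a * c))
    let t : ℝ := (1 - c) / (1 - a * c)
    (1 - t) • Ff + t • Fg = Fgf := by
  have h1 : (1 : ℝ) - a ≠ 0 := sub_ne_zero.mpr (fun h => ha h.symm)
  have h2 : (1 : ℝ) - c ≠ 0 := sub_ne_zero.mpr (fun h => hc h.symm)
  have h3 : (1 : ℝ) - a * c ≠ 0 := sub_ne_zero.mpr (fun h => hac h.symm)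
  simp only [Prod.ext_iff, Prod.smul_mk, Prod.mk_add_mk, smul_eq_mul]
  have h4 : (1 : ℝ) - c * a ≠ 0 := by rwa [mul_comm]
  constructor <;> field_simp <;> ring
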